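/- Let d ≥ 1, 0 < β ≤ d and 0 < γ ≤ 1, and define h(x) = |x|^{−β} (log(1/|x|))^{−γ} for 0 < |x| ≤ 2^{−1/d} and h(x) = 0 otherwise. Then h belongs to the Lorentz space L^{d/β, r}(ℝ^d) for every r > 1/γ, but h does not belong to L^{d/β, 1/γ}(ℝ^d). -/

import Mathlib

open MeasureTheory Real Set Metric FourierTransform
open scoped ENNReal NNReal RealInnerProductSpace

noncomputable section

variable {d : ℕ}

/-- Fourier transform of a finite Borel measure on ℝ^d:  μ̂(ξ) = ∫ e^{−2πi x·ξ} dμ(x). -/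
def mFT (μ : Measure (EuclideanSpace ℝ (Fin d))) (ξ : EuclideanSpace ℝ (Fin d)) : ℂ :=
  ∫ x, Complex.exp (-(2 * (π : ℂ) * Complex.I * ((⟪x, ξ⟫ : ℝ) : ℂ))) ∂μ

/-- Convolution with the dilated measure: (f ∗ μ_t)(x) = ∫ f(x − t y) dμ(y). -/
def convM (f : EuclideanSpace ℝ (Fin d) → ℂ) (μ : Measure (EuclideanSpace ℝ (Fin d)))
    (t : ℝ) (x : EuclideanSpace ℝ (Fin d)) : ℂ :=
  ∫ y, f (x - t • y) ∂μ

/-- Global maximal function M_μ f(x) = sup_{t>0} |(f ∗ μ_t)(x)|. -/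
def Mmax (μ : Measure (EuclideanSpace ℝ (Fin d))) (f : EuclideanSpace ℝ (Fin d) → ℂ)
    (x : EuclideanSpace ℝ (Fin d)) : ℝ≥0∞ :=
  ⨆ t : {t : ℝ // 0 < t}, (‖convM f μ t x‖₊ : ℝ≥0∞)

/-- Local maximal function M_μ^{loc} f(x) = sup_{t∈[1,2]} |(f ∗ μ_t)(x)|. -/
def MmaxLoc (μ : Measure (EuclideanSpace ℝ (Fin d))) (f : EuclideanSpace ℝ (Fin d) → ℂ)
    (x : EuclideanSpace ℝ (Fin d)) : ℝ≥0∞ :=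
  ⨆ t : (Icc (1:ℝ) 2), (‖convM f μ t x‖₊ : ℝ≥0∞)

/-- L^p norm (in lintegral form) of an ℝ≥0∞-valued function on ℝ^d. -/
def lpE (g : EuclideanSpace ℝ (Fin d) → ℝ≥0∞) (p : ℝ) : ℝ≥0∞ :=
  (∫⁻ x, g x ^ p) ^ (1 / p)

/-- Weak L^q quasinorm of an ℝ≥0∞-valued function on ℝ^d. -/
def wlpE (g : EuclideanSpace ℝ (Fin d) → ℝ≥0∞) (q : ℝ) : ℝ≥0∞ :=
  ⨆ l : ℝ≥0, (l : ℝ≥0∞) * (volume {x | (l : ℝ≥0∞) < g x}) ^ (1 / q)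

/-- Lorentz L^{p,1} norm (up to a constant factor p) of a complex-valued function. -/
def lorentz1 (f : EuclideanSpace ℝ (Fin d) → ℂ) (p : ℝ) : ℝ≥0∞ :=
  ∫⁻ l in Ioi (0:ℝ), (volume {x | l < ‖f x‖}) ^ (1 / p)

/-- Lorentz L^{p,r} quasinorm of a real-valued function,
‖f‖_{p,r} = ( ∫_0^∞ (λ · d_f(λ)^{1/p})^r dλ/λ )^{1/r}. -/
def lorentzR (f : EuclideanSpace ℝ (Fin d) → ℝ) (p r : ℝ) : ℝ≥0∞ :=
  (∫⁻ l in Ioi (0:ℝ),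
      (ENNReal.ofReal l * (volume {x | l < |f x|}) ^ (1 / p)) ^ r / ENNReal.ofReal l) ^ (1 / r)

/-- Littlewood–Paley projection P_k for k ∈ ℤ: (P_k f)^(ξ) = β(2^{−k}|ξ|) f̂(ξ). -/
def Pproj (β : ℝ → ℝ) (k : ℤ) (f : EuclideanSpace ℝ (Fin d) → ℂ)
    (x : EuclideanSpace ℝ (Fin d)) : ℂ :=
  ∫ ξ, Complex.exp (2 * (π : ℂ) * Complex.I * ((⟪x, ξ⟫ : ℝ) : ℂ)) *
    ((β ((2:ℝ) ^ (-k) * ‖ξ‖) : ℝ) : ℂ) * 𝓕 f ξ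

/-- The multiplier operator T_j^t, with multiplier m_j(tξ) = μ̂(tξ) β(2^{−j}|tξ|). -/
def Tj (μ : Measure (EuclideanSpace ℝ (Fin d))) (β : ℝ → ℝ) (j : ℕ) (t : ℝ)
    (f : EuclideanSpace ℝ (Fin d) → ℂ) (x : EuclideanSpace ℝ (Fin d)) : ℂ :=
  ∫ ξ, Complex.exp (2 * (π : ℂ) * Complex.I * ((⟪x, ξ⟫ : ℝ) : ℂ)) *
    (((β ((2:ℝ) ^ (-(j:ℤ)) * ‖t • ξ‖) : ℝ) : ℂ) * mFT μ (t • ξ)) * 𝓕 f ξ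

/-- The maximal multiplier operator T_j^* f(x) = sup_{t>0} |T_j^t f(x)|. -/
def TjStar (μ : Measure (EuclideanSpace ℝ (Fin d))) (β : ℝ → ℝ) (j : ℕ)
    (f : EuclideanSpace ℝ (Fin d) → ℂ) (x : EuclideanSpace ℝ (Fin d)) : ℝ≥0∞ :=
  ⨆ t : {t : ℝ // 0 < t}, (‖Tj μ β j t f x‖₊ : ℝ≥0∞)

/-- M_j f(x) = sup_{k∈ℤ} sup_{2^{−k} ≤ t < 2^{−k+1}} |(P_{k+j} f ∗ μ_t)(x)|. -/
def Mj (μ : Measure (EuclideanSpace ℝ (Fin d))) (β : ℝ → ℝ) (j : ℕ)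
    (f : EuclideanSpace ℝ (Fin d) → ℂ) (x : EuclideanSpace ℝ (Fin d)) : ℝ≥0∞ :=
  ⨆ k : ℤ, ⨆ t : (Ico ((2:ℝ) ^ (-k)) ((2:ℝ) ^ (-k+1))),
    (‖convM (Pproj β (k + j) f) μ t x‖₊ : ℝ≥0∞)

/-- P_j(μ_t ∗ μ̄_s)(x) = ∫ e^{2πi x·ξ} β(2^{−j}|ξ|) μ̂(tξ) conj(μ̂(sξ)) dξ. -/
def Kdisp (μ : Measure (EuclideanSpace ℝ (Fin d))) (β : ℝ → ℝ) (j : ℕ) (t s : ℝ)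
    (x : EuclideanSpace ℝ (Fin d)) : ℂ :=
  ∫ ξ, Complex.exp (2 * (π : ℂ) * Complex.I * ((⟪x, ξ⟫ : ℝ) : ℂ)) *
    ((β ((2:ℝ) ^ (-(j:ℤ)) * ‖ξ‖) : ℝ) : ℂ) * (mFT μ (t • ξ) * (starRingEnd ℂ) (mFT μ (s • ξ)))

/-- Convolution of a nonnegative function with a dilated measure, valued in [0,∞]. -/
def convNN (g : EuclideanSpace ℝ (Fin d) → ℝ) (σ : Measure (EuclideanSpace ℝ (Fin d)))
    (t : ℝ) (x : EuclideanSpace ℝ (Fin d)) : ℝ≥0∞ :=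
  ∫⁻ y, ENNReal.ofReal (g (x - t • y)) ∂σ

/-- The function h(x) = |x|^{−b}(log(1/|x|))^{−γ} on 0 < |x| ≤ 2^{−1/d}, extended by 0. -/
def hfun (d : ℕ) (b γ : ℝ) (x : EuclideanSpace ℝ (Fin d)) : ℝ :=
  if 0 < ‖x‖ ∧ ‖x‖ ≤ (2:ℝ) ^ (-(1:ℝ)/(d:ℝ)) then
    ‖x‖ ^ (-b) * (Real.log (1/‖x‖)) ^ (-γ)
  else 0

section Aux

variable {b γ : ℝ}

lemma Rlt1 (hd : 1 ≤ d) : (2:ℝ) ^ (-(1:ℝ)/(d:ℝ)) < 1 := by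
  apply Real.rpow_lt_one_of_one_lt_of_neg one_lt_two
  have h0 : (0:ℝ) < d := by exact_mod_cast hd
  have : (0:ℝ) < 1/(d:ℝ) := by positivity
  rw [neg_div]
  linarith

lemma Rpos : (0:ℝ) < (2:ℝ) ^ (-(1:ℝ)/(d:ℝ)) := Real.rpow_pos_of_pos two_pos _

lemma log_one_div_R (hd : 1 ≤ d) :
    Real.log (1 / (2:ℝ) ^ (-(1:ℝ)/(d:ℝ))) = Real.log 2 / d := by
  rw [one_div, ← Real.rpow_neg (le_of_lt two_pos), Real.log_rpow two_pos]
  ring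

lemma hfun_nonneg (hd : 1 ≤ d) (x : EuclideanSpace ℝ (Fin d)) : 0 ≤ hfun d b γ x := by
  unfold hfun
  split_ifs with h
  · apply mul_nonneg (Real.rpow_nonneg (norm_nonneg _) _)
    apply Real.rpow_nonneg
    apply Real.log_nonneg
    rw [le_one_div (by norm_num : (0:ℝ) < 1) h.1, one_div_one]
    exact le_trans h.2 (le_of_lt (Rlt1 hd))
  · exact le_refl 0

lemma log_one_div_norm_pos (hd : 1 ≤ d) {x : EuclideanSpace ℝ (Fin d)}
    (h1 : 0 < ‖x‖) (h2 : ‖x‖ ≤ (2:ℝ) ^ (-(1:ℝ)/(d:ℝ))) : 0 < Real.log (1/‖x‖) := by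
  apply Real.log_pos
  exact one_lt_one_div h1 (lt_of_le_of_lt h2 (Rlt1 hd))

/-- inversion: T < s^(-b) implies s < T^(-(1/b)) -/
lemma inv_rpow_lt {s T b : ℝ} (hs : 0 < s) (hb : 0 < b) (hT : 0 < T)
    (h : T < s ^ (-b)) : s < T ^ (-(1/b)) := by
  have hneg : -(1/b) < 0 := by
    have : 0 < 1/b := by positivity
    linarith
  have h2 := Real.rpow_lt_rpow_of_neg hT h hneg
  calc s = (s ^ (-b)) ^ (-(1/b)) := by
            rw [← Real.rpow_mul (le_of_lt hs)]
            rw [show (-b) * (-(1/b)) = 1 by field_simp]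
            exact (Real.rpow_one s).symm
    _ < T ^ (-(1/b)) := h2

end Aux

section Pointwise

variable {b γ : ℝ}

/-- Part A pointwise bound: level sets are contained in balls. -/
lemma aux_upper (hd : 1 ≤ d) (hb1 : 0 < b) (hγ1 : 0 < γ)
    {l : ℝ} (hl : Real.exp b / (Real.log 2 / d) ^ γ ≤ l)
    {x : EuclideanSpace ℝ (Fin d)} (hx : l < |hfun d b γ x|) :
    ‖x‖ < (l * ((Real.log (l * (Real.log 2 / d) ^ γ))/b) ^ γ) ^ (-(1/b)) := by
  set c₀ : ℝ := Real.log 2 / d with hc₀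
  have hd0 : (0:ℝ) < d := by exact_mod_cast hd
  have hc₀pos : 0 < c₀ := by
    rw [hc₀]; exact div_pos (Real.log_pos one_lt_two) hd0
  have hcγ : 0 < c₀ ^ γ := Real.rpow_pos_of_pos hc₀pos γ
  have hlpos : 0 < l := lt_of_lt_of_le (by positivity) hl
  -- l * c₀^γ ≥ exp b
  have hLb : Real.exp b ≤ l * c₀ ^ γ := by
    rw [div_le_iff₀ hcγ] at hl; linarith
  have hlc : 0 < l * c₀ ^ γ := lt_of_lt_of_le (Real.exp_pos b) hLb
  set L : ℝ := Real.log (l * c₀ ^ γ) with hLdef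
  have hLge : b ≤ L := by
    rw [hLdef, Real.le_log_iff_exp_le hlc]; exact hLb
  have hLpos : 0 < L := lt_of_lt_of_le hb1 hLge
  have hLbpos : 0 < L / b := div_pos hLpos hb1
  -- x is in the support
  have hne : hfun d b γ x ≠ 0 := by
    intro h0; rw [h0, abs_zero] at hx; linarith
  have hsupp : 0 < ‖x‖ ∧ ‖x‖ ≤ (2:ℝ) ^ (-(1:ℝ)/(d:ℝ)) := by
    by_contra hcon; exact hne (if_neg hcon)
  obtain ⟨hs0, hsR⟩ := hsupp
  have habs : |hfun d b γ x| = hfun d b γ x := abs_of_nonneg (hfun_nonneg hd x)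
  have hval : hfun d b γ x = ‖x‖ ^ (-b) * (Real.log (1/‖x‖)) ^ (-γ) := if_pos ⟨hs0, hsR⟩
  rw [habs, hval] at hx
  set s : ℝ := ‖x‖ with hsdef
  set u : ℝ := Real.log (1/s) with hudef
  have hu_pos : 0 < u := log_one_div_norm_pos hd hs0 hsR
  have hu_ge : c₀ ≤ u := by
    rw [hudef, hc₀, ← log_one_div_R hd]
    apply Real.log_le_log (by positivity)
    exact one_div_le_one_div_of_le hs0 hsR
  have hspos : 0 < s := hs0
  have hsb : 0 < s ^ (-b) := Real.rpow_pos_of_pos hspos _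
  -- step 1: crude bound
  have h1 : u ^ (-γ) ≤ c₀ ^ (-γ) :=
    rpow_le_rpow_of_nonpos hc₀pos hu_ge (by linarith)
  have h2 : l < s ^ (-b) * c₀ ^ (-γ) :=
    lt_of_lt_of_le hx (by nlinarith [hsb])
  have h3 : l * c₀ ^ γ < s ^ (-b) := by
    rw [Real.rpow_neg (le_of_lt hc₀pos)] at h2
    rw [← lt_div_iff₀ hcγ]
    rwa [div_eq_mul_inv]
  have h4 : s < (l * c₀ ^ γ) ^ (-(1/b)) := inv_rpow_lt hspos hb1 hlc h3
  -- improve: u > L / b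
  have h5 : L / b < u := by
    have hρpos : 0 < (l * c₀ ^ γ) ^ (-(1/b)) := Real.rpow_pos_of_pos hlc _
    have := Real.log_lt_log (by positivity : 0 < 1 / ((l * c₀ ^ γ) ^ (-(1/b))))
      (one_div_lt_one_div_of_lt hspos h4)
    rw [← hudef] at this
    refine lt_of_le_of_lt (le_of_eq ?_) this
    rw [one_div, ← Real.rpow_neg (le_of_lt hlc), Real.log_rpow hlc]
    rw [← hLdef]; ring
  -- step 2: refined bound
  have h6 : u ^ (-γ) ≤ (L/b) ^ (-γ) :=
    rpow_le_rpow_of_nonpos hLbpos (le_of_lt h5) (by linarith)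
  have h7 : l < s ^ (-b) * (L/b) ^ (-γ) :=
    lt_of_lt_of_le hx (by nlinarith [hsb])
  have hLbγ : 0 < (L/b) ^ γ := Real.rpow_pos_of_pos hLbpos γ
  have h8 : l * (L/b) ^ γ < s ^ (-b) := by
    rw [Real.rpow_neg (le_of_lt hLbpos)] at h7
    rw [← lt_div_iff₀ hLbγ]
    rwa [div_eq_mul_inv]
  exact inv_rpow_lt hspos hb1 (by positivity) h8

/-- Part B pointwise bound: h is large on annuli. -/
lemma aux_lower (hd : 1 ≤ d) (hb1 : 0 < b) (hγ1 : 0 < γ)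
    {s : ℝ} (hs0 : 0 < s) (hsR : s ≤ (2:ℝ) ^ (-(1:ℝ)/(d:ℝ)))
    {x : EuclideanSpace ℝ (Fin d)} (h1 : s/2 ≤ ‖x‖) (h2 : ‖x‖ ≤ s) :
    s ^ (-b) * (Real.log (2/s)) ^ (-γ) ≤ hfun d b γ x := by
  have hx0 : 0 < ‖x‖ := lt_of_lt_of_le (by positivity) h1
  have hxR : ‖x‖ ≤ (2:ℝ) ^ (-(1:ℝ)/(d:ℝ)) := le_trans h2 hsR
  have hval : hfun d b γ x = ‖x‖ ^ (-b) * (Real.log (1/‖x‖)) ^ (-γ) := if_pos ⟨hx0, hxR⟩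
  rw [hval]
  have hu_pos : 0 < Real.log (1/‖x‖) := log_one_div_norm_pos hd hx0 hxR
  have hA : s ^ (-b) ≤ ‖x‖ ^ (-b) :=
    rpow_le_rpow_of_nonpos hx0 h2 (by linarith)
  have hlog_le : Real.log (1/‖x‖) ≤ Real.log (2/s) := by
    apply Real.log_le_log (by positivity)
    calc 1/‖x‖ ≤ 1/(s/2) := one_div_le_one_div_of_le (by positivity) h1
      _ = 2/s := by field_simp
  have hB : (Real.log (2/s)) ^ (-γ) ≤ (Real.log (1/‖x‖)) ^ (-γ) :=
    rpow_le_rpow_of_nonpos hu_pos hlog_le (by linarith)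
  apply mul_le_mul hA hB
  · apply Real.rpow_nonneg
    apply Real.log_nonneg
    have hs1 : s < 1 := lt_of_le_of_lt hsR (Rlt1 hd)
    rw [le_div_iff₀ hs0]; linarith
  · exact Real.rpow_nonneg (norm_nonneg _) _

end Pointwise

section Integrals

/-- Tail integrability of (log(lc))^{-γr} b^{γr} / l on (e^b/c, ∞). -/
lemma tail_integrable {b γ r c : ℝ} (hb1 : 0 < b) (hγr : 1 < γ * r) (hc : 0 < c) :
    IntegrableOn (fun l => (Real.log (l*c)) ^ (-(γ*r)) * b ^ (γ*r) / l)
      (Ioi (Real.exp b / c)) volume := by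
  set a : ℝ := Real.exp b / c with ha
  have hapos : 0 < a := by positivity
  set K : ℝ := b ^ (γ*r) / (1 - γ*r) with hK
  have hderiv : ∀ l, a ≤ l → HasDerivAt (fun l => K * (Real.log (l*c)) ^ (1 - γ*r))
      ((Real.log (l*c)) ^ (-(γ*r)) * b ^ (γ*r) / l) l := by
    intro l hl
    have hl0 : 0 < l := lt_of_lt_of_le hapos hl
    have hlc : 0 < l * c := by positivity
    have hexp : Real.exp b ≤ l * c := by
      rw [ha, div_le_iff₀ hc] at hl; linarith
    have hlog : b ≤ Real.log (l*c) := by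
      rw [Real.le_log_iff_exp_le hlc]; exact hexp
    have hlogpos : 0 < Real.log (l*c) := lt_of_lt_of_le hb1 hlog
    have h1 : HasDerivAt (fun y : ℝ => y * c) c l := hasDerivAt_mul_const c
    have h2 := h1.log (ne_of_gt hlc)
    have h3 := h2.rpow_const (p := 1 - γ*r) (Or.inl (ne_of_gt hlogpos))
    have h4 := h3.const_mul K
    refine h4.congr_deriv ?_
    have he : (1 - γ*r) - 1 = -(γ*r) := by ring
    rw [he, hK]
    have h5 : (1:ℝ) - γ*r ≠ 0 := by intro h; nlinarith
    field_simp
  apply integrableOn_Ioi_deriv_of_nonneg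
    ((hderiv a le_rfl).continuousAt.continuousWithinAt)
    (fun l hl => hderiv l (le_of_lt hl))
  · intro l hl
    have hal : a ≤ l := le_of_lt hl
    have hl0 : 0 < l := lt_of_lt_of_le hapos hal
    have hlc : 0 < l * c := by positivity
    have hexp : Real.exp b ≤ l * c := by
      rw [ha, div_le_iff₀ hc] at hal; linarith
    have hlog : 0 < Real.log (l*c) := by
      have : b ≤ Real.log (l*c) := by
        rw [Real.le_log_iff_exp_le hlc]; exact hexp
      linarith
    apply div_nonneg _ (le_of_lt hl0)
    exact mul_nonneg (Real.rpow_nonneg (le_of_lt hlog) _) (Real.rpow_nonneg (le_of_lt hb1) _)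
  · have t1 : Filter.Tendsto (fun l : ℝ => l * c) Filter.atTop Filter.atTop :=
      Filter.Tendsto.atTop_mul_const hc Filter.tendsto_id
    have t2 : Filter.Tendsto (fun l : ℝ => Real.log (l*c)) Filter.atTop Filter.atTop :=
      Real.tendsto_log_atTop.comp t1
    have t3 : Filter.Tendsto (fun l : ℝ => (Real.log (l*c)) ^ (1 - γ*r))
        Filter.atTop (nhds 0) := by
      have h := (tendsto_rpow_neg_atTop (by linarith : (0:ℝ) < γ*r - 1)).comp t2
      have he : -(γ*r - 1) = 1 - γ*r := by ring
      simpa [Function.comp_def, he] using h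
    have := t3.const_mul K
    simpa using this

/-- The harmonic series diverges in ℝ≥0∞. -/
lemma harmonic_tsum_top : ∑' k : ℕ, ENNReal.ofReal (1/((k:ℝ)+1)) = ⊤ := by
  by_contra h
  have hsummable : Summable (fun k : ℕ => Real.toNNReal (1/((k:ℝ)+1))) := by
    rw [← ENNReal.tsum_coe_ne_top_iff_summable]
    simpa [ENNReal.ofReal] using h
  have h2 : Summable (fun k : ℕ => (1:ℝ)/((k:ℝ)+1)) := by
    have := NNReal.summable_coe.mpr hsummable
    convert this using 2 with k
    rw [Real.coe_toNNReal _ (by positivity)]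
  have h3 : Summable (fun n : ℕ => (1:ℝ)/(n:ℝ)) := by
    rw [← summable_nat_add_iff 1]
    exact_mod_cast h2
  exact Real.not_summable_one_div_natCast h3

end Integrals

section PartA

lemma partA (d : ℕ) (hd : 1 ≤ d) (b γ : ℝ) (hb1 : 0 < b) (hb2 : b ≤ d)
    (hγ1 : 0 < γ) (r : ℝ) (hγr : 1 < γ * r) (hr0 : 0 < r) :
    (∫⁻ l in Ioi (0:ℝ),
      (ENNReal.ofReal l *
        (volume {x : EuclideanSpace ℝ (Fin d) | l < |hfun d b γ x|}) ^ (b/(d:ℝ))) ^ r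
        / ENNReal.ofReal l) < ⊤ := by
  haveI : Nonempty (Fin d) := ⟨⟨0, hd⟩⟩
  have hd0 : (0:ℝ) < d := by exact_mod_cast hd
  set q : ℝ := b/(d:ℝ) with hq
  have hq0 : 0 < q := by positivity
  have hq1 : q ≤ 1 := by rw [hq, div_le_one hd0]; exact hb2
  set D : ℝ → ℝ≥0∞ := fun l =>
    volume {x : EuclideanSpace ℝ (Fin d) | l < |hfun d b γ x|} with hD
  set F : ℝ → ℝ≥0∞ := fun l => (ENNReal.ofReal l * D l ^ q) ^ r / ENNReal.ofReal l with hF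
  set R : ℝ := (2:ℝ) ^ (-(1:ℝ)/(d:ℝ)) with hR
  set c₀ : ℝ := Real.log 2 / d with hc₀
  have hc₀pos : 0 < c₀ := div_pos (Real.log_pos one_lt_two) hd0
  set c : ℝ := c₀ ^ γ with hc
  have hcpos : 0 < c := Real.rpow_pos_of_pos hc₀pos γ
  set l₁ : ℝ := Real.exp b / c with hl₁
  have hl₁pos : 0 < l₁ := by positivity
  set ω : ℝ≥0∞ := volume (ball (0:EuclideanSpace ℝ (Fin d)) 1) with hω
  have hωt : ω ≠ ⊤ := measure_ball_lt_top.ne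
  set V : ℝ≥0∞ := volume (closedBall (0:EuclideanSpace ℝ (Fin d)) R) with hV
  have hVt : V ≠ ⊤ := measure_closedBall_lt_top.ne
  -- piece 1 : small l
  set K₀ : ℝ≥0∞ := (V ^ q) ^ r with hK₀
  have hK₀t : K₀ ≠ ⊤ :=
    ENNReal.rpow_ne_top_of_nonneg (le_of_lt hr0) (ENNReal.rpow_ne_top_of_nonneg (le_of_lt hq0) hVt)
  have hbound1 : ∀ l ∈ Ioc (0:ℝ) l₁, F l ≤ K₀ * ENNReal.ofReal (l ^ (r-1)) := by
    intro l hl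
    have hl0 : 0 < l := hl.1
    have hDV : D l ≤ V := by
      apply measure_mono
      intro x hx
      simp only [mem_setOf_eq] at hx
      have hne : hfun d b γ x ≠ 0 := by
        intro h0; rw [h0, abs_zero] at hx; linarith
      have hsupp : 0 < ‖x‖ ∧ ‖x‖ ≤ R := by
        by_contra hcon; exact hne (if_neg hcon)
      exact mem_closedBall_zero_iff.mpr hsupp.2
    have step1 : (ENNReal.ofReal l * D l ^ q) ^ r ≤ (ENNReal.ofReal l) ^ r * (V ^ q) ^ r := by
      rw [← ENNReal.mul_rpow_of_nonneg _ _ (le_of_lt hr0)]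
      apply ENNReal.rpow_le_rpow _ (le_of_lt hr0)
      exact mul_le_mul_right (ENNReal.rpow_le_rpow hDV (le_of_lt hq0)) _
    calc F l ≤ ((ENNReal.ofReal l) ^ r * K₀) / ENNReal.ofReal l :=
          ENNReal.div_le_div_right step1 _
      _ = K₀ * ((ENNReal.ofReal l) ^ r / ENNReal.ofReal l) := by
          rw [div_eq_mul_inv, div_eq_mul_inv]; ring
      _ = K₀ * ENNReal.ofReal (l ^ (r-1)) := by
          congr 1
          rw [← ENNReal.ofReal_rpow_of_pos hl0,
            ENNReal.rpow_sub r 1 (ENNReal.ofReal_pos.mpr hl0).ne' ENNReal.ofReal_ne_top,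
            ENNReal.rpow_one]
  have hint1 : (∫⁻ l in Ioc (0:ℝ) l₁, F l) < ⊤ := by
    have hInt : IntegrableOn (fun l : ℝ => l ^ (r-1)) (Ioc 0 l₁) volume := by
      rw [← intervalIntegrable_iff_integrableOn_Ioc_of_le (le_of_lt hl₁pos)]
      exact intervalIntegral.intervalIntegrable_rpow' (by linarith)
    have hlt : (∫⁻ l in Ioc (0:ℝ) l₁, ENNReal.ofReal (l ^ (r-1))) < ⊤ :=
      hInt.lintegral_lt_top
    calc (∫⁻ l in Ioc (0:ℝ) l₁, F l)
        ≤ ∫⁻ l in Ioc (0:ℝ) l₁, K₀ * ENNReal.ofReal (l ^ (r-1)) := by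
          apply lintegral_mono_ae
          exact (ae_restrict_mem measurableSet_Ioc).mono hbound1
      _ = K₀ * ∫⁻ l in Ioc (0:ℝ) l₁, ENNReal.ofReal (l ^ (r-1)) :=
          lintegral_const_mul' _ _ hK₀t
      _ < ⊤ := ENNReal.mul_lt_top hK₀t.lt_top hlt
  -- piece 2 : large l
  set K₁ : ℝ≥0∞ := (ω ^ q) ^ r with hK₁
  have hK₁t : K₁ ≠ ⊤ :=
    ENNReal.rpow_ne_top_of_nonneg (le_of_lt hr0) (ENNReal.rpow_ne_top_of_nonneg (le_of_lt hq0) hωt)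
  set G : ℝ → ℝ := fun l => (Real.log (l*c)) ^ (-(γ*r)) * b ^ (γ*r) / l with hG
  have hbound2 : ∀ l ∈ Ioi l₁, F l ≤ K₁ * ENNReal.ofReal (G l) := by
    intro l hl
    have hll : l₁ ≤ l := le_of_lt hl
    have hl0 : 0 < l := lt_of_lt_of_le hl₁pos hll
    have hexp : Real.exp b ≤ l * c := by
      rw [hl₁, div_le_iff₀ hcpos] at hll; linarith
    have hlc : 0 < l * c := lt_of_lt_of_le (Real.exp_pos b) hexp
    set L : ℝ := Real.log (l * c) with hL
    have hLb : b ≤ L := by rw [hL, Real.le_log_iff_exp_le hlc]; exact hexp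
    have hLpos : 0 < L := lt_of_lt_of_le hb1 hLb
    have hLbpos : 0 < L / b := div_pos hLpos hb1
    set ρ : ℝ := (l * (L/b) ^ γ) ^ (-(1/b)) with hρ
    have hbase : 0 < l * (L/b) ^ γ := by positivity
    have hρpos : 0 < ρ := Real.rpow_pos_of_pos hbase _
    have hDl : D l ≤ ENNReal.ofReal (ρ ^ d) * ω := by
      have hsub : {x : EuclideanSpace ℝ (Fin d) | l < |hfun d b γ x|}
          ⊆ ball (0:EuclideanSpace ℝ (Fin d)) ρ := by
        intro x hx
        simp only [mem_setOf_eq] at hx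
        rw [mem_ball_zero_iff]
        exact aux_upper hd hb1 hγ1 hll hx
      calc D l ≤ volume (ball (0:EuclideanSpace ℝ (Fin d)) ρ) := measure_mono hsub
        _ = ENNReal.ofReal (ρ ^ d) * ω := by
            rw [Measure.addHaar_ball volume _ (le_of_lt hρpos), finrank_euclideanSpace_fin]
    -- D l ^ q ≤ ofReal (ρ^b) * ω^q
    have hrpow_d : ((ρ : ℝ) ^ (d:ℕ)) ^ q = ρ ^ b := by
      rw [← Real.rpow_natCast ρ d, ← Real.rpow_mul (le_of_lt hρpos)]
      congr 1
      rw [hq]; field_simp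
    have hDq : D l ^ q ≤ ENNReal.ofReal (ρ ^ b) * ω ^ q := by
      calc D l ^ q ≤ (ENNReal.ofReal (ρ ^ d) * ω) ^ q :=
            ENNReal.rpow_le_rpow hDl (le_of_lt hq0)
        _ = ENNReal.ofReal (ρ ^ b) * ω ^ q := by
            rw [ENNReal.mul_rpow_of_nonneg _ _ (le_of_lt hq0),
              ENNReal.ofReal_rpow_of_pos (by positivity), hrpow_d]
    have hlρb : l * ρ ^ b = (L/b) ^ (-γ) := by
      have h1 : ρ ^ b = (l * (L/b) ^ γ)⁻¹ := by
        rw [hρ, ← Real.rpow_mul (le_of_lt hbase)]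
        rw [show -(1/b) * b = -1 by field_simp]
        exact Real.rpow_neg_one _
      rw [h1, Real.rpow_neg (le_of_lt hLbpos)]
      have h2 : (L/b) ^ γ ≠ 0 := ne_of_gt (Real.rpow_pos_of_pos hLbpos γ)
      field_simp
    have hGr : ((L/b) ^ (-γ)) ^ r = (Real.log (l*c)) ^ (-(γ*r)) * b ^ (γ*r) := by
      rw [← Real.rpow_mul (le_of_lt hLbpos), show -γ * r = -(γ*r) by ring]
      rw [Real.div_rpow (le_of_lt hLpos) (le_of_lt hb1)]
      rw [Real.rpow_neg (le_of_lt hb1) (γ*r)]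
      rw [← hL]; field_simp
    calc F l ≤ (ENNReal.ofReal (l * ρ ^ b) * ω ^ q) ^ r / ENNReal.ofReal l := by
          apply ENNReal.div_le_div_right
          apply ENNReal.rpow_le_rpow _ (le_of_lt hr0)
          rw [ENNReal.ofReal_mul (le_of_lt hl0)]
          rw [mul_assoc]
          exact mul_le_mul_right hDq _
      _ = ENNReal.ofReal (((L/b) ^ (-γ)) ^ r) * K₁ / ENNReal.ofReal l := by
          rw [hlρb, ENNReal.mul_rpow_of_nonneg _ _ (le_of_lt hr0),
            ENNReal.ofReal_rpow_of_pos (Real.rpow_pos_of_pos hLbpos _)]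
      _ = K₁ * ENNReal.ofReal (G l) := by
          rw [hGr, hG]
          simp only []
          rw [ENNReal.ofReal_div_of_pos hl0, ← hL]
          rw [div_eq_mul_inv, div_eq_mul_inv]; ring
  have hint2 : (∫⁻ l in Ioi l₁, F l) < ⊤ := by
    have hInt : IntegrableOn G (Ioi l₁) volume := by
      rw [hl₁]; exact tail_integrable hb1 hγr hcpos
    calc (∫⁻ l in Ioi l₁, F l)
        ≤ ∫⁻ l in Ioi l₁, K₁ * ENNReal.ofReal (G l) := by
          apply lintegral_mono_ae
          exact (ae_restrict_mem measurableSet_Ioi).mono hbound2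
      _ = K₁ * ∫⁻ l in Ioi l₁, ENNReal.ofReal (G l) := lintegral_const_mul' _ _ hK₁t
      _ < ⊤ := ENNReal.mul_lt_top hK₁t.lt_top hInt.lintegral_lt_top
  -- combine
  have hsplit : (∫⁻ l in Ioi (0:ℝ), F l)
      ≤ (∫⁻ l in Ioc (0:ℝ) l₁, F l) + ∫⁻ l in Ioi l₁, F l := by
    have hre : volume.restrict (Ioi (0:ℝ))
        ≤ volume.restrict (Ioc (0:ℝ) l₁) + volume.restrict (Ioi l₁) := by
      rw [← Ioc_union_Ioi_eq_Ioi (le_of_lt hl₁pos)]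
      exact Measure.restrict_union_le _ _
    calc (∫⁻ l in Ioi (0:ℝ), F l)
        ≤ ∫⁻ l, F l ∂(volume.restrict (Ioc (0:ℝ) l₁) + volume.restrict (Ioi l₁)) :=
          lintegral_mono' hre le_rfl
      _ = (∫⁻ l in Ioc (0:ℝ) l₁, F l) + ∫⁻ l in Ioi l₁, F l := lintegral_add_measure _ _ _
  exact lt_of_le_of_lt hsplit (ENNReal.add_lt_top.mpr ⟨hint1, hint2⟩)

end PartA


section PartB

set_option maxHeartbeats 2000000 in
lemma partB (d : ℕ) (hd : 1 ≤ d) (b γ : ℝ) (hb1 : 0 < b) (hb2 : b ≤ d)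
    (hγ1 : 0 < γ) (hγ2 : γ ≤ 1) :
    (∫⁻ l in Ioi (0:ℝ),
      (ENNReal.ofReal l *
        (volume {x : EuclideanSpace ℝ (Fin d) | l < |hfun d b γ x|}) ^ (b/(d:ℝ))) ^ (1/γ)
        / ENNReal.ofReal l) = ⊤ := by
  haveI : Nonempty (Fin d) := ⟨⟨0, hd⟩⟩
  have hd0 : (0:ℝ) < d := by exact_mod_cast hd
  have hlog2 : 0 < Real.log 2 := Real.log_pos one_lt_two
  set r : ℝ := 1/γ with hr
  have hr0 : 0 < r := by rw [hr]; positivity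
  have hγr : γ * r = 1 := by rw [hr]; field_simp
  set q : ℝ := b/(d:ℝ) with hq
  have hq0 : 0 < q := by rw [hq]; positivity
  have hq1 : q ≤ 1 := by rw [hq, div_le_one hd0]; exact hb2
  clear_value r q
  set D : ℝ → ℝ≥0∞ := fun l =>
    volume {x : EuclideanSpace ℝ (Fin d) | l < |hfun d b γ x|} with hD
  set F : ℝ → ℝ≥0∞ := fun l => (ENNReal.ofReal l * D l ^ q) ^ r / ENNReal.ofReal l with hF
  set R : ℝ := (2:ℝ) ^ (-(1:ℝ)/(d:ℝ)) with hR
  set ω : ℝ≥0∞ := volume (ball (0:EuclideanSpace ℝ (Fin d)) 1) with hω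
  have hωt : ω ≠ ⊤ := measure_ball_lt_top.ne
  have hω0 : ω ≠ 0 := (measure_ball_pos volume _ one_pos).ne'
  clear_value ω
  -- the sparse scales
  set N : ℕ := ⌈2/b⌉₊ with hN
  have hN1 : 1 ≤ (N:ℝ) := by
    have : 0 < N := Nat.ceil_pos.mpr (by positivity)
    exact_mod_cast this
  have hNb : 2 ≤ (N:ℝ) * b := by
    have h1 : 2/b ≤ (N:ℝ) := Nat.le_ceil _
    rw [div_le_iff₀ hb1] at h1; linarith
  clear_value N
  set a : ℕ → ℝ := fun k => (N:ℝ)*(k+1)+1 with ha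
  clear_value a
  have ha1 : ∀ k, 1 ≤ a k := by
    intro k; simp only [ha]
    have hk : (0:ℝ) ≤ (k:ℝ) := Nat.cast_nonneg k
    nlinarith
  have haN : ∀ k, (N:ℝ) ≤ a k := by
    intro k; simp only [ha]
    have hk : (0:ℝ) ≤ (k:ℝ) := Nat.cast_nonneg k
    nlinarith
  have hapos : ∀ k, 0 < a k := fun k => lt_of_lt_of_le one_pos (ha1 k)
  set s : ℕ → ℝ := fun k => (2:ℝ) ^ (-(a k)) with hs
  clear_value s
  have hspos : ∀ k, 0 < s k := by
    intro k; simp only [hs]; positivity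
  have hsR : ∀ k, s k ≤ R := by
    intro k
    simp only [hs, hR]
    apply Real.rpow_le_rpow_of_exponent_le one_le_two
    rw [neg_div]
    have h1 : 1/(d:ℝ) ≤ 1 := by
      rw [div_le_one hd0]; exact_mod_cast hd
    have h2 := ha1 k
    linarith
  have hlogs : ∀ k, Real.log (2 / s k) = (a k + 1) * Real.log 2 := by
    intro k
    have he : 2 / s k = (2:ℝ) ^ (1 + a k) := by
      simp only [hs]
      rw [Real.rpow_add two_pos, Real.rpow_one, Real.rpow_neg (le_of_lt two_pos)]
      field_simp
    rw [he, Real.log_rpow two_pos]; ring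
  have hskb : ∀ k, (s k) ^ (-b) = (2:ℝ) ^ (a k * b) := by
    intro k
    simp only [hs]
    rw [← Real.rpow_mul (le_of_lt two_pos)]
    congr 1; ring
  set X : ℕ → ℝ := fun k => (a k + 1) * Real.log 2 with hX
  clear_value X
  have hXpos : ∀ k, 0 < X k := by
    intro k; simp only [hX]
    have := hapos k
    exact mul_pos (by linarith) hlog2
  set Λ : ℕ → ℝ := fun k => (s k) ^ (-b) * (X k) ^ (-γ) with hΛ
  clear_value Λ
  have hΛpos : ∀ k, 0 < Λ k := by
    intro k; simp only [hΛ]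
    exact mul_pos (Real.rpow_pos_of_pos (hspos k) _) (Real.rpow_pos_of_pos (hXpos k) _)
  have h4eq : (2:ℝ) ^ (2:ℝ) = 4 := by
    rw [show (2:ℝ) = ((2:ℕ):ℝ) by norm_num, Real.rpow_natCast]; norm_num
  -- doubling
  have hΛdouble : ∀ k, 2 * Λ k ≤ Λ (k+1) := by
    intro k
    have hsucc : a (k+1) = a k + N := by simp only [ha]; push_cast; ring
    have e1 : (s (k+1)) ^ (-b) = (s k) ^ (-b) * (2:ℝ) ^ ((N:ℝ)*b) := by
      rw [hskb, hskb, ← Real.rpow_add two_pos]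
      congr 1; rw [hsucc]; ring
    have e2 : (X k) ^ (-γ) / 2 ≤ (X (k+1)) ^ (-γ) := by
      have hbase : X (k+1) ≤ 2 * X k := by
        simp only [hX]
        rw [hsucc]
        nlinarith [hlog2, haN k, ha1 k]
      have h2X : 0 < X (k+1) := hXpos (k+1)
      have h3 : (2 * X k) ^ (-γ) ≤ (X (k+1)) ^ (-γ) :=
        rpow_le_rpow_of_nonpos h2X hbase (by linarith)
      have h4 : (2 * X k) ^ (-γ) = (2:ℝ) ^ (-γ) * (X k) ^ (-γ) :=
        Real.mul_rpow (le_of_lt two_pos) (le_of_lt (hXpos k))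
      have h5 : (1:ℝ)/2 ≤ (2:ℝ) ^ (-γ) := by
        have := Real.rpow_le_rpow_of_exponent_le one_le_two
          (show -1 ≤ -γ by linarith)
        rw [Real.rpow_neg_one] at this
        linarith
      have h6 := Real.rpow_nonneg (le_of_lt (hXpos k)) (-γ)
      nlinarith
    have e3 : (4:ℝ) ≤ (2:ℝ) ^ ((N:ℝ)*b) := by
      rw [← h4eq]
      exact Real.rpow_le_rpow_of_exponent_le one_le_two hNb
    have hsb := Real.rpow_pos_of_pos (hspos k) (-b)
    have hXγ := Real.rpow_nonneg (le_of_lt (hXpos k)) (-γ)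
    have h2b := Real.rpow_pos_of_pos two_pos ((N:ℝ)*b)
    calc 2 * Λ k = (s k) ^ (-b) * (2 * ((X k) ^ (-γ))) := by simp only [hΛ]; ring
      _ ≤ ((s k) ^ (-b) * (2:ℝ) ^ ((N:ℝ)*b)) * ((X k) ^ (-γ) / 2) := by
          nlinarith [mul_nonneg (mul_nonneg (le_of_lt hsb) hXγ) (sub_nonneg.mpr e3)]
      _ ≤ ((s k) ^ (-b) * (2:ℝ) ^ ((N:ℝ)*b)) * ((X (k+1)) ^ (-γ)) := by
          apply mul_le_mul_of_nonneg_left e2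
          exact mul_nonneg (le_of_lt hsb) (le_of_lt h2b)
      _ = Λ (k+1) := by simp only [hΛ]; rw [e1]
  have hΛmono : Monotone Λ := by
    apply monotone_nat_of_le_succ
    intro k
    have h1 := hΛdouble k; have h2 := hΛpos k; linarith
  -- the disjoint intervals
  set I : ℕ → Set ℝ := fun k => Ioo (Λ k / 2) (Λ k) with hI
  clear_value I
  have hImeas : ∀ k, MeasurableSet (I k) := by
    intro k; simp only [hI]; exact measurableSet_Ioo
  have hkey : ∀ i j, i < j → Disjoint (I i) (I j) := by
    intro i j hij
    rcases j with _ | m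
    · omega
    · have h1 : Λ i ≤ Λ m := hΛmono (by omega)
      have h2 := hΛdouble m
      rw [Set.disjoint_left]
      intro x hx1 hx2
      simp only [hI, mem_Ioo] at hx1 hx2
      have h3 := hx1.2; have h4 := hx2.1
      linarith
  have hdisj : Pairwise (Function.onFun Disjoint I) := by
    intro i j hne
    rcases hne.lt_or_gt with h | h
    · exact hkey i j h
    · exact (hkey j i h).symm
  have hsub : (⋃ k, I k) ⊆ Ioi (0:ℝ) := by
    intro x hx
    obtain ⟨k, hk⟩ := mem_iUnion.mp hx
    simp only [hI, mem_Ioo] at hk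
    have := hΛpos k
    exact lt_trans (by linarith) hk.1
  -- per-interval lower bound
  set Kω : ℝ≥0∞ := (ω ^ q) ^ r with hKω
  have hKω0 : Kω ≠ 0 := by
    apply ne_of_gt
    rw [hKω]
    apply ENNReal.rpow_pos
    · exact ENNReal.rpow_pos (lt_of_le_of_ne zero_le (Ne.symm hω0)) hωt
    · exact ENNReal.rpow_ne_top_of_nonneg (le_of_lt hq0) hωt
  clear_value Kω
  set w : ℕ → ℝ := fun k => (X k)⁻¹ / (4:ℝ) ^ r * (1/2) with hw
  clear_value w
  have hterm : ∀ k, Kω * ENNReal.ofReal (w k) ≤ ∫⁻ l in I k, F l := by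
    intro k
    have hΛk := hΛpos k
    have hsk := hspos k
    have hXk := hXpos k
    set cst : ℝ≥0∞ :=
      ENNReal.ofReal ((X k) ^ (-γ) / 4) ^ r * Kω / ENNReal.ofReal (Λ k) with hcst
    have hFlow : ∀ l ∈ I k, cst ≤ F l := by
      intro l hl
      simp only [hI, mem_Ioo] at hl
      have hl0 : 0 < l := lt_trans (by linarith) hl.1
      -- D l is at least the annulus volume
      have hDl : ENNReal.ofReal ((s k) ^ (d:ℕ) / 2) * ω ≤ D l := by
        have hsubann : closedBall (0:EuclideanSpace ℝ (Fin d)) (s k) \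
            ball (0:EuclideanSpace ℝ (Fin d)) (s k / 2)
            ⊆ {x : EuclideanSpace ℝ (Fin d) | l < |hfun d b γ x|} := by
          intro x hx
          obtain ⟨hx1, hx2⟩ := hx
          rw [mem_closedBall_zero_iff] at hx1
          rw [mem_ball_zero_iff, not_lt] at hx2
          have hlow := aux_lower hd hb1 hγ1 (hspos k) (by rw [← hR]; exact hsR k) hx2 hx1
          rw [hlogs k] at hlow
          have hΛeq : (s k) ^ (-b) * ((a k + 1) * Real.log 2) ^ (-γ) = Λ k := by
            simp only [hΛ, hX]
          rw [hΛeq] at hlow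
          have hnn : 0 ≤ hfun d b γ x := hfun_nonneg hd x
          simp only [mem_setOf_eq]
          rw [abs_of_nonneg hnn]
          linarith [hl.2]
        have hm := measure_mono (μ := (volume : Measure (EuclideanSpace ℝ (Fin d)))) hsubann
        have hvol : volume (closedBall (0:EuclideanSpace ℝ (Fin d)) (s k) \
            ball (0:EuclideanSpace ℝ (Fin d)) (s k / 2))
            = ENNReal.ofReal ((s k) ^ (d:ℕ)) * ω - ENNReal.ofReal ((s k / 2) ^ (d:ℕ)) * ω := by
          rw [measure_diff
            ((ball_subset_ball (by linarith : s k / 2 ≤ s k)).trans ball_subset_closedBall)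
            measurableSet_ball.nullMeasurableSet measure_ball_lt_top.ne]
          rw [hω, Measure.addHaar_closedBall volume _ (le_of_lt hsk),
            Measure.addHaar_ball volume _ (by linarith : (0:ℝ) ≤ s k / 2),
            finrank_euclideanSpace_fin]
        have hmD : volume (closedBall (0:EuclideanSpace ℝ (Fin d)) (s k) \
            ball (0:EuclideanSpace ℝ (Fin d)) (s k / 2)) ≤ D l := by
          simp only [hD]; exact hm
        refine le_trans ?_ (le_trans (le_of_eq hvol.symm) hmD)
        apply (ENNReal.cancel_of_ne
          (ENNReal.mul_ne_top ENNReal.ofReal_ne_top hωt)).le_tsub_of_add_le_right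
        rw [← add_mul, ← ENNReal.ofReal_add
          (div_nonneg (pow_nonneg (le_of_lt hsk) _) (by norm_num))
          (pow_nonneg (by linarith) _)]
        apply mul_le_mul_left
        apply ENNReal.ofReal_le_ofReal
        have hpow2 : (2:ℝ) ≤ (2:ℝ) ^ (d:ℕ) := by
          calc (2:ℝ) = 2^1 := (pow_one 2).symm
            _ ≤ 2^(d:ℕ) := pow_le_pow_right₀ one_le_two hd
        have hdp : (s k / 2) ^ (d:ℕ) = (s k) ^ (d:ℕ) / (2:ℝ)^(d:ℕ) := div_pow _ _ _
        rw [hdp]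
        have hskd : (0:ℝ) < (s k) ^ (d:ℕ) := pow_pos hsk _
        have hfin : (s k) ^ (d:ℕ) / (2:ℝ)^(d:ℕ) ≤ (s k) ^ (d:ℕ) / 2 := by
          rw [div_le_div_iff₀ (by positivity : (0:ℝ) < (2:ℝ)^(d:ℕ)) (by norm_num : (0:ℝ) < 2)]
          nlinarith [hskd, hpow2]
        linarith
      -- numerator bound
      have hrpow_d : (((s k) : ℝ) ^ (d:ℕ)) ^ q = (s k) ^ b := by
        rw [← Real.rpow_natCast (s k) d, ← Real.rpow_mul (le_of_lt hsk)]
        congr 1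
        rw [hq]; field_simp
      have hΛs : Λ k * (s k) ^ b = (X k) ^ (-γ) := by
        simp only [hΛ]
        rw [Real.rpow_neg (le_of_lt hsk) b]
        have hne : (s k) ^ b ≠ 0 := ne_of_gt (Real.rpow_pos_of_pos hsk b)
        field_simp
      have h2q : ((s k) ^ (d:ℕ) / 2) ^ q = (s k) ^ b / (2:ℝ) ^ q := by
        rw [Real.div_rpow (pow_nonneg (le_of_lt hsk) _) (le_of_lt two_pos), hrpow_d]
      have h2qle : (2:ℝ) ^ q ≤ 2 := by
        have := Real.rpow_le_rpow_of_exponent_le one_le_two hq1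
        rwa [Real.rpow_one] at this
      have h2qpos : (0:ℝ) < (2:ℝ) ^ q := Real.rpow_pos_of_pos two_pos q
      have hskb' : (0:ℝ) < (s k) ^ b := Real.rpow_pos_of_pos hsk b
      have hnum : (X k) ^ (-γ) / 4 ≤ (Λ k / 2) * (((s k) ^ (d:ℕ) / 2) ^ q) := by
        have h3 : (s k) ^ b / 2 ≤ (s k) ^ b / (2:ℝ) ^ q := by
          rw [div_le_div_iff₀ (by norm_num : (0:ℝ) < 2) h2qpos]
          nlinarith [hskb', h2qle]
        calc (X k) ^ (-γ) / 4 = (Λ k / 2) * ((s k) ^ b / 2) := by rw [← hΛs]; ring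
          _ ≤ (Λ k / 2) * ((s k) ^ b / (2:ℝ) ^ q) :=
              mul_le_mul_of_nonneg_left h3 (by linarith)
          _ = (Λ k / 2) * (((s k) ^ (d:ℕ) / 2) ^ q) := by rw [h2q]
      -- assemble
      have step1 : ENNReal.ofReal ((X k) ^ (-γ) / 4) * ω ^ q
          ≤ ENNReal.ofReal l * D l ^ q := by
        have i1 : ENNReal.ofReal ((X k) ^ (-γ) / 4)
            ≤ ENNReal.ofReal (Λ k / 2) * ENNReal.ofReal (((s k) ^ (d:ℕ) / 2) ^ q) := by
          rw [← ENNReal.ofReal_mul (by linarith : (0:ℝ) ≤ Λ k / 2)]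
          exact ENNReal.ofReal_le_ofReal hnum
        have i2 : ENNReal.ofReal (((s k) ^ (d:ℕ) / 2) ^ q)
            = (ENNReal.ofReal ((s k) ^ (d:ℕ) / 2)) ^ q :=
          (ENNReal.ofReal_rpow_of_pos (div_pos (pow_pos hsk _) two_pos)).symm
        calc ENNReal.ofReal ((X k) ^ (-γ) / 4) * ω ^ q
            ≤ (ENNReal.ofReal (Λ k / 2) * (ENNReal.ofReal ((s k) ^ (d:ℕ) / 2)) ^ q) * ω ^ q := by
              apply mul_le_mul_left
              rw [← i2]; exact i1
          _ = ENNReal.ofReal (Λ k / 2) * (ENNReal.ofReal ((s k) ^ (d:ℕ) / 2) * ω) ^ q := by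
              rw [ENNReal.mul_rpow_of_nonneg _ _ (le_of_lt hq0)]; ring
          _ ≤ ENNReal.ofReal l * D l ^ q := by
              apply mul_le_mul'
              · exact ENNReal.ofReal_le_ofReal (le_of_lt hl.1)
              · exact ENNReal.rpow_le_rpow hDl (le_of_lt hq0)
      calc cst = (ENNReal.ofReal ((X k) ^ (-γ) / 4) * ω ^ q) ^ r / ENNReal.ofReal (Λ k) := by
            rw [hcst, ENNReal.mul_rpow_of_nonneg _ _ (le_of_lt hr0), hKω]
        _ ≤ (ENNReal.ofReal ((X k) ^ (-γ) / 4) * ω ^ q) ^ r / ENNReal.ofReal l :=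
            ENNReal.div_le_div_left (ENNReal.ofReal_le_ofReal (le_of_lt hl.2)) _
        _ ≤ (ENNReal.ofReal l * D l ^ q) ^ r / ENNReal.ofReal l :=
            ENNReal.div_le_div_right (ENNReal.rpow_le_rpow step1 (le_of_lt hr0)) _
        _ = F l := by rw [hF]
    -- integrate the constant over I k
    have hIvol : volume (I k) = ENNReal.ofReal (Λ k / 2) := by
      simp only [hI]
      rw [Real.volume_Ioo]
      congr 1; ring
    have hwith : Kω * ENNReal.ofReal (w k) = cst * volume (I k) := by
      rw [hIvol, hcst]
      have hof : ENNReal.ofReal ((X k) ^ (-γ) / 4) ^ r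
          = ENNReal.ofReal ((X k)⁻¹ / (4:ℝ) ^ r) := by
        rw [ENNReal.ofReal_rpow_of_pos
          (div_pos (Real.rpow_pos_of_pos hXk _) (by norm_num))]
        congr 1
        rw [Real.div_rpow (Real.rpow_nonneg (le_of_lt hXk) _) (by norm_num)]
        congr 1
        rw [← Real.rpow_mul (le_of_lt hXk), show -γ * r = -1 by rw [← hγr]; ring,
          Real.rpow_neg_one]
      have hdivhalf : ENNReal.ofReal (Λ k / 2) / ENNReal.ofReal (Λ k)
          = ENNReal.ofReal (1/2) := by
        rw [← ENNReal.ofReal_div_of_pos hΛk]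
        congr 1
        field_simp
      calc Kω * ENNReal.ofReal (w k)
          = ENNReal.ofReal ((X k)⁻¹ / (4:ℝ) ^ r) * Kω * ENNReal.ofReal (1/2) := by
            simp only [hw]
            rw [ENNReal.ofReal_mul (div_nonneg (inv_nonneg.mpr (le_of_lt hXk))
              (le_of_lt (Real.rpow_pos_of_pos (by norm_num : (0:ℝ) < 4) r)))]
            ring
        _ = ENNReal.ofReal ((X k) ^ (-γ) / 4) ^ r * Kω *
              (ENNReal.ofReal (Λ k / 2) / ENNReal.ofReal (Λ k)) := by
            rw [hof, hdivhalf]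
        _ = ENNReal.ofReal ((X k) ^ (-γ) / 4) ^ r * Kω / ENNReal.ofReal (Λ k) *
              ENNReal.ofReal (Λ k / 2) := by
            simp only [div_eq_mul_inv]
            ring
    calc Kω * ENNReal.ofReal (w k) ≤ cst * volume (I k) := hwith.le
      _ = ∫⁻ _ in I k, cst := (setLIntegral_const _ _).symm
      _ ≤ ∫⁻ l in I k, F l := by
          apply lintegral_mono_ae
          exact (ae_restrict_mem (hImeas k)).mono hFlow
  -- sum the lower bounds
  have hsum : ∑' k : ℕ, ENNReal.ofReal (w k) = ⊤ := by
    set C : ℝ := (3*(N:ℝ)*Real.log 2)⁻¹ / (4:ℝ) ^ r * (1/2) with hC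
    have h3N : (0:ℝ) < 3*(N:ℝ)*Real.log 2 := by nlinarith [hlog2, hN1]
    have h4r : (0:ℝ) < (4:ℝ) ^ r := Real.rpow_pos_of_pos (by norm_num) r
    have h4ri : (0:ℝ) ≤ ((4:ℝ) ^ r)⁻¹ := by positivity
    have hCpos : 0 < C := by
      rw [hC]
      exact mul_pos (div_pos (inv_pos.mpr h3N) h4r) (by norm_num)
    have hwk : ∀ k : ℕ, C * (1/((k:ℝ)+1)) ≤ w k := by
      intro k
      have hk : (0:ℝ) ≤ (k:ℝ) := Nat.cast_nonneg k
      have hk1 : (0:ℝ) < (k:ℝ)+1 := by linarith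
      have hN1k : (1:ℝ) ≤ (N:ℝ)*((k:ℝ)+1) := by nlinarith [hN1]
      have hXle : X k ≤ (3*(N:ℝ)*Real.log 2)*((k:ℝ)+1) := by
        simp only [hX, ha]
        nlinarith [mul_nonneg (by linarith : (0:ℝ) ≤ 2*((N:ℝ)*((k:ℝ)+1)) - 2) (le_of_lt hlog2)]
      have hXinv : ((3*(N:ℝ)*Real.log 2)*((k:ℝ)+1))⁻¹ ≤ (X k)⁻¹ := by
        have h := one_div_le_one_div_of_le (hXpos k) hXle
        rwa [one_div, one_div] at h
      have hXinv2 : (3*(N:ℝ)*Real.log 2)⁻¹ * ((k:ℝ)+1)⁻¹ ≤ (X k)⁻¹ := by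
        rwa [← mul_inv]
      simp only [hw, hC, one_div, div_eq_mul_inv]
      nlinarith [mul_nonneg (mul_nonneg (sub_nonneg.mpr hXinv2) h4ri)
        (by norm_num : (0:ℝ) ≤ 1/2)]
    have hge : ENNReal.ofReal C * ∑' k : ℕ, ENNReal.ofReal (1/((k:ℝ)+1))
        ≤ ∑' k : ℕ, ENNReal.ofReal (w k) := by
      rw [← ENNReal.tsum_mul_left]
      apply ENNReal.tsum_le_tsum
      intro k
      rw [← ENNReal.ofReal_mul (le_of_lt hCpos)]
      exact ENNReal.ofReal_le_ofReal (hwk k)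
    rw [harmonic_tsum_top, ENNReal.mul_top (ENNReal.ofReal_pos.mpr hCpos).ne'] at hge
    exact top_le_iff.mp hge
  -- conclude
  rw [eq_top_iff]
  calc (⊤:ℝ≥0∞) = Kω * ∑' k : ℕ, ENNReal.ofReal (w k) := by
        rw [hsum, ENNReal.mul_top hKω0]
    _ = ∑' k : ℕ, Kω * ENNReal.ofReal (w k) := ENNReal.tsum_mul_left.symm
    _ ≤ ∑' k : ℕ, ∫⁻ l in I k, F l := ENNReal.tsum_le_tsum hterm
    _ = ∫⁻ l in ⋃ k, I k, F l := (lintegral_iUnion hImeas hdisj F).symm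
    _ ≤ ∫⁻ l in Ioi (0:ℝ), F l := lintegral_mono_set hsub

end PartB

/-- h ∈ L^{d/b,r}(ℝ^d) for every r > 1/γ, but h ∉ L^{d/b,1/γ}(ℝ^d). -/
theorem stmt15 (d : ℕ) (hd : 1 ≤ d) (b γ : ℝ) (hb1 : 0 < b) (hb2 : b ≤ d)
    (hγ1 : 0 < γ) (hγ2 : γ ≤ 1) :
    (∀ r : ℝ, 1/γ < r → lorentzR (hfun d b γ) ((d:ℝ)/b) r < ⊤) ∧
      ¬ lorentzR (hfun d b γ) ((d:ℝ)/b) (1/γ) < ⊤ := by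
  constructor
  · intro r hr
    have hγr : 1 < γ * r := by
      rw [div_lt_iff₀ hγ1] at hr; nlinarith
    have hr0 : 0 < r := lt_trans (by positivity) hr
    have key := partA d hd b γ hb1 hb2 hγ1 r hγr hr0
    unfold lorentzR
    rw [one_div_div]
    exact ENNReal.rpow_lt_top_of_nonneg (by positivity) key.ne
  · intro hcon
    have key := partB d hd b γ hb1 hb2 hγ1 hγ2
    unfold lorentzR at hcon
    rw [one_div_div, key, one_div_one_div, ENNReal.top_rpow_of_pos hγ1] at hcon
    exact lt_irrefl _ hcon
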